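/- Let P(z) = Σ_{k=0}^m A_k z^k be a matrix polynomial with A_m invertible. Set r₂ = max_{1 ≤ k ≤ m} { 2^{3(m−1)} C(2m, m+k)^{-1} 𝒫_k^{-2} ‖A_{m−k}‖ ‖A_m^{-1}‖ }^{1/k}, where 𝒫_k is the k-th Pell number. Then every eigenvalue λ of P satisfies |λ| ≤ r₂. -/

import Mathlib

def pell : ℕ → ℕ
  | 0 => 0
  | 1 => 1
  | (n + 2) => 2 * pell (n + 1) + pell n
noncomputable def opNorm {n : ℕ} (A : Matrix (Fin n) (Fin n) ℂ) : ℝ :=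
  ‖Matrix.toEuclideanCLM (𝕜 := ℂ) A‖


noncomputable section AuxPell

private def alphaP : ℤ√2 := ⟨1,1⟩

private lemma alphaP_sq : alphaP ^ 2 = 2 * alphaP + 1 := by
  ext <;> simp [alphaP, pow_two, Zsqrtd.re_mul, Zsqrtd.im_mul]

private lemma alphaP_mul_star : alphaP * star alphaP = -1 := by
  ext <;> simp [alphaP, Zsqrtd.re_mul, Zsqrtd.im_mul]

private def reHom : ℤ√2 →+ ℤ := AddMonoidHom.mk' Zsqrtd.re (fun _ _ => rfl)

private lemma alphaP_pow_rec (k : ℕ) : alphaP ^ (k+2) = 2 * alphaP ^ (k+1) + alphaP ^ k := by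
  have h : alphaP ^ (k+2) = alphaP ^ k * alphaP ^ 2 := by ring
  rw [h, alphaP_sq]; ring

private lemma alphaP_im (k : ℕ) : (alphaP ^ k).im = pell k := by
  induction k using Nat.twoStepInduction with
  | zero => simp [pell]
  | one => simp [alphaP, pell]
  | more k ih2 ih1 =>
    rw [alphaP_pow_rec, pell]
    push_cast
    simp [Zsqrtd.im_add, Zsqrtd.im_mul, ih1, ih2]

private lemma alphaP_pow_mul_star (k : ℕ) : alphaP ^ k * (star alphaP) ^ k = (-1) ^ k := by
  rw [← mul_pow, alphaP_mul_star]

private lemma neg_one_pow_re (k : ℕ) : ((-1 : ℤ√2) ^ k).re = (-1 : ℤ) ^ k := by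
  have h : ((-1 : ℤ√2)) ^ k = (((-1 : ℤ) ^ k : ℤ) : ℤ√2) := by push_cast; ring
  rw [h, Zsqrtd.re_intCast]

private lemma alphaP_re_two_mul (k : ℕ) :
    (alphaP ^ (2 * k)).re = 4 * (pell k : ℤ) ^ 2 + (-1) ^ k := by
  have h1 : alphaP ^ (2 * k) = alphaP ^ k * alphaP ^ k := by rw [two_mul, pow_add]
  have h2 : ((-1 : ℤ√2)) ^ k = alphaP ^ k * star (alphaP ^ k) := by
    rw [star_pow, alphaP_pow_mul_star]
  have h2re := congrArg Zsqrtd.re h2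
  rw [neg_one_pow_re] at h2re
  rw [h1]
  simp only [Zsqrtd.re_mul, Zsqrtd.re_star, Zsqrtd.im_star, alphaP_im] at h2re ⊢
  nlinarith [h2re]

private lemma prod_re (m j : ℕ) :
    (alphaP ^ (2*j) * (star alphaP) ^ (2*m)).re = (alphaP ^ (2 * Nat.dist j m)).re := by
  rcases le_total m j with h | h
  · have hd : Nat.dist j m = j - m := Nat.dist_eq_sub_of_le_right h
    have h2 : 2*j = 2*(j-m) + 2*m := by omega
    rw [hd, h2, pow_add, mul_assoc, alphaP_pow_mul_star, Even.neg_one_pow (even_two_mul _), mul_one]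
  · have hd : Nat.dist j m = m - j := Nat.dist_eq_sub_of_le h
    have h2 : 2*m = 2*j + 2*(m-j) := by omega
    rw [hd, h2, pow_add, ← mul_assoc, alphaP_pow_mul_star, Even.neg_one_pow (even_two_mul _), one_mul,
      ← star_pow]
    exact (Zsqrtd.re_star _)

private lemma sq_one_add : (alphaP ^ 2 + 1) ^ 2 = 8 * alphaP ^ 2 := by
  ext <;> simp [alphaP, pow_two, Zsqrtd.re_mul, Zsqrtd.im_mul, Zsqrtd.re_add, Zsqrtd.im_add]

open Finset

private lemma zsqrtd_sum (m : ℕ) :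
    ∑ j ∈ range (2*m+1), (((2*m).choose j : ℤ) : ℤ√2) * (alphaP ^ (2*j) * (star alphaP) ^ (2*m))
      = (((8:ℤ)^m : ℤ) : ℤ√2) := by
  have h1 := add_pow (alphaP ^ 2) 1 (2*m)
  have h2 : (alphaP ^ 2 + 1) ^ (2*m) = 8 ^ m * alphaP ^ (2*m) := by
    rw [pow_mul, sq_one_add, mul_pow, ← pow_mul]
  have h3 := congrArg (· * (star alphaP) ^ (2*m)) (h1.symm.trans h2)
  rw [mul_assoc, alphaP_pow_mul_star, Even.neg_one_pow (even_two_mul _), mul_one, sum_mul] at h3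
  rw [show (((8:ℤ)^m : ℤ) : ℤ√2) = (8:ℤ√2)^m by push_cast; ring, ← h3]
  apply sum_congr rfl
  intro j _
  push_cast
  rw [← pow_mul]
  ring

private lemma int_sum (m : ℕ) :
    ∑ j ∈ range (2*m+1), ((2*m).choose j : ℤ) * (alphaP ^ (2 * Nat.dist j m)).re = 8^m := by
  have h := congrArg reHom (zsqrtd_sum m)
  rw [map_sum] at h
  simp only [reHom, AddMonoidHom.mk'_apply, Zsqrtd.re_smul, Zsqrtd.re_intCast] at h
  rw [← h]
  apply sum_congr rfl
  intro j _
  rw [prod_re]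

private lemma dist_parity (m j : ℕ) : ((-1:ℤ)) ^ (j + m) = (-1) ^ (Nat.dist j m) := by
  have h : j + m = Nat.dist j m + 2 * min j m := by simp [Nat.dist]; omega
  rw [h, pow_add, pow_mul, neg_one_sq, one_pow, mul_one]

private lemma alt_sum (m : ℕ) (hm : 1 ≤ m) :
    ∑ j ∈ range (2*m+1), ((2*m).choose j : ℤ) * (-1) ^ (Nat.dist j m) = 0 := by
  have h := Int.alternating_sum_range_choose (n := 2*m)
  rw [if_neg (by omega)] at h
  calc ∑ j ∈ range (2*m+1), ((2*m).choose j : ℤ) * (-1) ^ (Nat.dist j m)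
      = (-1)^m * ∑ j ∈ range (2*m+1), (-1)^j * ((2*m).choose j : ℤ) := by
        rw [mul_sum]; apply sum_congr rfl; intro j _
        rw [← dist_parity, pow_add]; ring
    _ = 0 := by rw [h, mul_zero]

private lemma sumA (m : ℕ) (hm : 1 ≤ m) :
    ∑ j ∈ range (2*m+1), ((2*m).choose j : ℤ) * (4 * (pell (Nat.dist j m) : ℤ)^2) = 8^m := by
  have h := int_sum m
  have h2 := alt_sum m hm
  have h3 : ∑ j ∈ range (2*m+1), ((2*m).choose j : ℤ) * (4 * (pell (Nat.dist j m) : ℤ)^2)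
      = (∑ j ∈ range (2*m+1), ((2*m).choose j : ℤ) * (alphaP ^ (2 * Nat.dist j m)).re)
        - ∑ j ∈ range (2*m+1), ((2*m).choose j : ℤ) * (-1) ^ (Nat.dist j m) := by
    rw [← sum_sub_distrib]
    apply sum_congr rfl
    intro j _
    rw [alphaP_re_two_mul]
    ring
  rw [h3, h, h2, sub_zero]

private lemma key (m : ℕ) (hm : 1 ≤ m) :
    (8:ℤ)^m = 8 * ∑ k ∈ range m, ((2*m).choose (m+k+1) : ℤ) * (pell (k+1) : ℤ)^2 := by
  have h := sumA m hm
  set f : ℕ → ℤ := fun j => ((2*m).choose j : ℤ) * (4 * (pell (Nat.dist j m) : ℤ)^2) with hf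
  have hsplit : ∑ j ∈ range (2*m+1), f j
      = ∑ j ∈ range m, f j + ∑ k ∈ range (m+1), f (m+k) := by
    have e2 : ∑ i ∈ Ico m (2*m+1), f i = ∑ k ∈ range (m+1), f (m+k) := by
      rw [sum_Ico_eq_sum_range]
      have h21 : 2*m+1-m = m+1 := by omega
      rw [h21]
    rw [range_eq_Ico, ← sum_Ico_consecutive f (Nat.zero_le m) (by omega), e2, ← range_eq_Ico]
  have hS2 : ∑ k ∈ range (m+1), f (m+k)
      = ∑ k ∈ range m, ((2*m).choose (m+k+1) : ℤ) * (4 * (pell (k+1) : ℤ)^2) := by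
    rw [sum_range_succ']
    have h0 : f (m+0) = 0 := by
      simp [hf, Nat.dist_self, pell]
    rw [h0, add_zero]
    apply sum_congr rfl
    intro k _
    have : Nat.dist (m+(k+1)) m = k+1 := by simp [Nat.dist]
    rw [hf]
    simp only [this]
    congr 2
  have hS1 : ∑ j ∈ range m, f j
      = ∑ k ∈ range m, ((2*m).choose (m+k+1) : ℤ) * (4 * (pell (k+1) : ℤ)^2) := by
    rw [← sum_range_reflect]
    apply sum_congr rfl
    intro k hk
    have hk' : k < m := mem_range.mp hk
    have hd : Nat.dist (m-1-k) m = k+1 := by simp [Nat.dist]; omega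
    have hc : (2*m).choose (m-1-k) = (2*m).choose (m+k+1) := by
      rw [← Nat.choose_symm (by omega)]
      congr 1
      omega
    rw [hf]
    simp only [hd, hc]
  rw [hsplit, hS1, hS2] at h
  rw [← h, mul_sum, ← sum_add_distrib]
  apply sum_congr rfl
  intro k _
  ring

private lemma pell_pos : ∀ k : ℕ, 0 < pell (k+1) := by
  intro k
  induction k with
  | zero => simp [pell]
  | succ k ih =>
    have : pell (k+1+1) = 2 * pell (k+1) + pell k := rfl
    omega

private lemma pell_sum_real (m : ℕ) (hm : 1 ≤ m) :
    ∑ k ∈ Finset.range m, ((2*m).choose (m+k+1) : ℝ) * (pell (k+1) : ℝ)^2 = 8^(m-1) := by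
  have h := key m hm
  have h8 : (8:ℤ)^m = 8 * 8^(m-1) := by
    rw [← pow_succ']
    congr 1
    omega
  rw [h8] at h
  have hZ : ∑ k ∈ Finset.range m, ((2*m).choose (m+k+1) : ℤ) * (pell (k+1) : ℤ)^2 = 8^(m-1) :=
    (mul_left_cancel₀ (by norm_num : (8:ℤ) ≠ 0) h).symm
  have := congrArg (fun z : ℤ => (z : ℝ)) hZ
  push_cast at this
  exact this

end AuxPell

lemma opNorm_nonneg {n : ℕ} (A : Matrix (Fin n) (Fin n) ℂ) : 0 ≤ opNorm A := norm_nonneg _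

set_option synthInstance.maxHeartbeats 400000 in
lemma opNorm_smul {n : ℕ} (c : ℂ) (M : Matrix (Fin n) (Fin n) ℂ) :
    opNorm (c • M) = ‖c‖ * opNorm M := by
  unfold opNorm
  rw [map_smul]
  exact norm_smul c (Matrix.toEuclideanCLM (𝕜 := ℂ) M)

set_option synthInstance.maxHeartbeats 400000 in
lemma opNorm_sum_le {n : ℕ} {ι : Type*} (s : Finset ι) (f : ι → Matrix (Fin n) (Fin n) ℂ) :
    opNorm (∑ i ∈ s, f i) ≤ ∑ i ∈ s, opNorm (f i) := by
  unfold opNorm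
  rw [map_sum]
  exact norm_sum_le _ _

set_option synthInstance.maxHeartbeats 400000 in
lemma opNorm_mul_le {n : ℕ} (A B : Matrix (Fin n) (Fin n) ℂ) :
    opNorm (A * B) ≤ opNorm A * opNorm B := by
  unfold opNorm
  rw [map_mul]
  exact norm_mul_le _ _

set_option maxHeartbeats 1000000 in
set_option synthInstance.maxHeartbeats 400000 in
theorem matrixPoly_eigenvalue_upper_bound_pell {n : ℕ} (m : ℕ) (hm : 0 < m)
    (A : ℕ → Matrix (Fin n) (Fin n) ℂ) (hAm : IsUnit (A m).det)
    (r₂ : ℝ)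
    (hr₂ : r₂ = (Finset.Icc 1 m).sup' (Finset.nonempty_Icc.mpr hm)
        fun k => ((2 : ℝ) ^ ((3 : ℤ) * ((m : ℤ) - 1))
            * ((Nat.choose (2 * m) (m + k) : ℝ))⁻¹ * ((pell k : ℝ) ^ 2)⁻¹
            * opNorm (A (m - k)) * opNorm (A m)⁻¹)
          ^ ((1 : ℝ) / k))
    (lam : ℂ)
    (hlam : (∑ k ∈ Finset.range (m + 1), lam ^ k • A k).det = 0) :
    ‖lam‖ ≤ r₂ := by
  classical
  by_contra hcon
  push_neg at hcon
  set base : ℕ → ℝ := fun k => (2 : ℝ) ^ ((3 : ℤ) * ((m : ℤ) - 1))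
      * ((Nat.choose (2 * m) (m + k) : ℝ))⁻¹ * ((pell k : ℝ) ^ 2)⁻¹
      * opNorm (A (m - k)) * opNorm (A m)⁻¹ with hbase
  have hbase_nonneg : ∀ k, 0 ≤ base k := by
    intro k
    have h1 : (0:ℝ) < (2 : ℝ) ^ ((3 : ℤ) * ((m : ℤ) - 1)) := zpow_pos (by norm_num) _
    have := opNorm_nonneg (A (m - k))
    have := opNorm_nonneg ((A m)⁻¹)
    positivity
  -- r₂ ≥ 0
  have hr₂' : r₂ = (Finset.Icc 1 m).sup' (Finset.nonempty_Icc.mpr hm)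
      (fun k => base k ^ ((1:ℝ)/k)) := hr₂
  have hr₂0 : 0 ≤ r₂ := by
    rw [hr₂']
    refine le_trans ?_ (Finset.le_sup' (fun k => base k ^ ((1:ℝ)/k))
      (Finset.mem_Icc.mpr ⟨hm, le_refl m⟩))
    exact Real.rpow_nonneg (hbase_nonneg m) _
  have habs : 0 < ‖lam‖ := lt_of_le_of_lt hr₂0 hcon
  have hlam0 : lam ≠ 0 := by
    intro h; rw [h] at habs; simp at habs
  -- per k strict bound: base k < |lam|^k
  have hbaselt : ∀ k, 1 ≤ k → k ≤ m → base k < ‖lam‖ ^ k := by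
    intro k hk1 hk2
    have hmem : k ∈ Finset.Icc 1 m := Finset.mem_Icc.mpr ⟨hk1, hk2⟩
    have hle : base k ^ ((1:ℝ)/k) ≤ r₂ := by
      rw [hr₂']; exact Finset.le_sup' (fun k => base k ^ ((1:ℝ)/k)) hmem
    have hlt : base k ^ ((1:ℝ)/k) < ‖lam‖ := lt_of_le_of_lt hle hcon
    have heq : (base k ^ ((1:ℝ)/k)) ^ k = base k := by
      rw [← Real.rpow_natCast (base k ^ ((1:ℝ)/k)) k, ← Real.rpow_mul (hbase_nonneg k),
        one_div, inv_mul_cancel₀ (Nat.cast_ne_zero.mpr (by omega) : (k:ℝ) ≠ 0),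
        Real.rpow_one]
    calc base k = (base k ^ ((1:ℝ)/k)) ^ k := heq.symm
      _ < ‖lam‖ ^ k :=
          pow_lt_pow_left₀ hlt (Real.rpow_nonneg (hbase_nonneg k) _) (by omega)
  -- the c's
  set c : ℕ → ℝ := fun k => ((2*m).choose (m+k) : ℝ) * (pell k : ℝ)^2 / 8^(m-1) with hc
  have h8pos : (0:ℝ) < 8^(m-1) := by positivity
  have hc_sum : ∑ j ∈ Finset.range m, c (j+1) = 1 := by
    rw [hc]
    simp only
    rw [← Finset.sum_div]
    rw [div_eq_one_iff_eq (ne_of_gt h8pos)]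
    have := pell_sum_real m hm
    rw [← this]
    apply Finset.sum_congr rfl
    intro j _
    have hidx : m+(j+1) = m+j+1 := by omega
    rw [hidx]
  have hc_pos : ∀ j, j < m → 0 < c (j+1) := by
    intro j hj
    have hch : 0 < (2*m).choose (m+(j+1)) := Nat.choose_pos (by omega)
    have hp := pell_pos j
    rw [hc]
    have : (0:ℝ) < ((2*m).choose (m+(j+1)) : ℝ) := by exact_mod_cast hch
    have : (0:ℝ) < (pell (j+1) : ℝ) := by exact_mod_cast hp
    positivity
  -- zpow to pow conversion
  have h2pow : (2 : ℝ) ^ ((3 : ℤ) * ((m : ℤ) - 1)) = 8^(m-1) := by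
    have he : (3 : ℤ) * ((m : ℤ) - 1) = ((3*(m-1) : ℕ) : ℤ) := by push_cast; omega
    rw [he, zpow_natCast, pow_mul]
    norm_num
  -- per-term inequality
  have hterm : ∀ j, j < m →
      opNorm ((A m)⁻¹ * A (m-(j+1))) * (‖lam‖⁻¹)^(j+1) < c (j+1) := by
    intro j hj
    set k := j + 1 with hk
    have hblt := hbaselt k (by omega) (by omega)
    have hckpos := hc_pos j hj
    have hbeq : base k = opNorm (A (m-k)) * opNorm ((A m)⁻¹) / c k := by
      rw [hbase, hc]
      simp only
      rw [h2pow]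
      have hch : (0:ℝ) < ((2*m).choose (m+k) : ℝ) := by
        exact_mod_cast Nat.choose_pos (by omega : m+k ≤ 2*m)
      have hp : (0:ℝ) < (pell k : ℝ) := by exact_mod_cast pell_pos j
      field_simp
    rw [hbeq, div_lt_iff₀ hckpos] at hblt
    have h1 : opNorm ((A m)⁻¹ * A (m-k)) ≤ opNorm ((A m)⁻¹) * opNorm (A (m-k)) :=
      opNorm_mul_le _ _
    have hpowpos : (0:ℝ) < ‖lam‖ ^ k := pow_pos habs k
    calc opNorm ((A m)⁻¹ * A (m-k)) * (‖lam‖⁻¹)^k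
        ≤ (opNorm (A (m-k)) * opNorm ((A m)⁻¹)) * (‖lam‖⁻¹)^k := by
          apply mul_le_mul_of_nonneg_right _ (by positivity)
          rw [mul_comm (opNorm (A (m-k)))]
          exact h1
      _ < c k := by
          rw [inv_pow, ← div_eq_mul_inv, div_lt_iff₀ hpowpos]
          have hcomm := mul_comm (‖lam‖ ^ k) (c k)
          linarith [hblt]
  -- matrices
  set N : Matrix (Fin n) (Fin n) ℂ := ∑ j ∈ Finset.range (m+1), (lam⁻¹)^j • A (m-j) with hN
  have hMN : (∑ k ∈ Finset.range (m + 1), lam ^ k • A k) = lam^m • N := by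
    rw [hN, Finset.smul_sum, ← Finset.sum_range_reflect (fun k => lam ^ k • A k) (m+1)]
    apply Finset.sum_congr rfl
    intro j hj
    have hj' : j ≤ m := by have := Finset.mem_range.mp hj; omega
    have : m + 1 - 1 - j = m - j := by omega
    rw [this, smul_smul]
    congr 1
    rw [inv_pow]
    field_simp
    rw [← pow_add]
    congr 1
    omega
  have hdetN : N.det = 0 := by
    have := hlam
    rw [hMN, Matrix.det_smul] at this
    have hnz : (lam^m)^(Fintype.card (Fin n)) ≠ 0 := pow_ne_zero _ (pow_ne_zero _ hlam0)
    exact (mul_eq_zero.mp this).resolve_left hnz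
  set B : Matrix (Fin n) (Fin n) ℂ :=
    ∑ j ∈ Finset.range m, (lam⁻¹)^(j+1) • ((A m)⁻¹ * A (m-(j+1))) with hB
  have hNB : (A m)⁻¹ * N = 1 + B := by
    rw [hN, hB, Finset.sum_range_succ']
    simp only [pow_zero, one_smul, Nat.sub_zero]
    rw [Matrix.mul_add, Matrix.nonsing_inv_mul _ hAm, Finset.mul_sum, add_comm]
    congr 1
    apply Finset.sum_congr rfl
    intro j _
    rw [Matrix.mul_smul]
  -- norm bound
  have hBnorm : opNorm B < 1 := by
    have hle : opNorm B ≤ ∑ j ∈ Finset.range m,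
        opNorm ((A m)⁻¹ * A (m-(j+1))) * (‖lam‖⁻¹)^(j+1) := by
      rw [hB]
      refine le_trans (opNorm_sum_le _ _) (le_of_eq ?_)
      apply Finset.sum_congr rfl
      intro j _
      rw [opNorm_smul]
      have hn : ‖lam⁻¹ ^ (j+1)‖ = (‖lam‖⁻¹)^(j+1) := by
        simp
      rw [hn, mul_comm]
    refine lt_of_le_of_lt hle ?_
    rw [← hc_sum]
    apply Finset.sum_lt_sum_of_nonempty (Finset.nonempty_range_iff.mpr (by omega))
    intro j hj
    exact hterm j (Finset.mem_range.mp hj)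
  -- invertibility
  set e := Matrix.toEuclideanCLM (𝕜 := ℂ) (n := Fin n)
  have hunitCLM : IsUnit ((1 : _) + e B) := by
    have h1 : ‖-(e B)‖ < 1 := by rw [norm_neg]; exact hBnorm
    have := (Units.oneSub (-(e B)) h1).isUnit
    simpa using this
  have hunit : IsUnit ((1 : Matrix (Fin n) (Fin n) ℂ) + B) := by
    have h2 := hunitCLM.map e.symm
    rwa [map_add, map_one, StarAlgEquiv.symm_apply_apply] at h2
  have hdet1 : ((1 : Matrix (Fin n) (Fin n) ℂ) + B).det ≠ 0 :=
    ((Matrix.isUnit_iff_isUnit_det _).mp hunit).ne_zero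
  have hfin : ((A m)⁻¹ * N).det = (A m)⁻¹.det * N.det := Matrix.det_mul _ _
  rw [hNB, hdetN, mul_zero] at hfin
  exact hdet1 hfin
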